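/- Let I ⊂ ℚ[S,T] be the ideal generated by (T−1)(T²−1), (S−1)(S²−1), and (S−T)(T−1), and let R₂ = ℚ[S,T]/I. Then for every integer ℓ ≥ 1 there exists a unique ℚ-algebra endomorphism ψ^ℓ of R₂ with ψ^ℓ(S) = S^ℓ and ψ^ℓ(T) = T^ℓ; moreover ψ^1 = id and ψ^k ∘ ψ^ℓ = ψ^{kℓ} for all k, ℓ ≥ 1, so these operations make R₂ a ψ-ring. -/

import Mathlib

/-!
STATEMENT 15: Let `R₂ = ℚ[S,T]/⟨(T-1)(T²-1), (S-1)(S²-1), (S-T)(T-1)⟩`.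
For every `ℓ ≥ 1` there is a unique ℚ-algebra endomorphism `ψ^ℓ` of `R₂` with
`ψ^ℓ(S) = S^ℓ` and `ψ^ℓ(T) = T^ℓ`; moreover `ψ^1 = id` and
`ψ^k ∘ ψ^ℓ = ψ^{kℓ}` for all `k, ℓ ≥ 1`, so these make `R₂` a ψ-ring.
-/

open MvPolynomial

/-- The defining ideal of the virtual K-theory of `ℙ(1,2)`:
`⟨(T-1)(T²-1), (S-1)(S²-1), (S-T)(T-1)⟩ ⊆ ℚ[S,T]`, with `S = X 0`, `T = X 1`. -/
noncomputable def virtIdeal2 : Ideal (MvPolynomial (Fin 2) ℚ) :=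
  Ideal.span
    {(X 1 - 1) * ((X 1) ^ 2 - 1),
     (X 0 - 1) * ((X 0) ^ 2 - 1),
     (X 0 - X 1) * (X 1 - 1)}

/-- `R₂ = ℚ[S,T]/⟨(T-1)(T²-1), (S-1)(S²-1), (S-T)(T-1)⟩`. -/
abbrev VirtK2 : Type := MvPolynomial (Fin 2) ℚ ⧸ virtIdeal2

/-- The image of `S` in `R₂`. -/
noncomputable def sElt : VirtK2 := Ideal.Quotient.mk virtIdeal2 (X 0)

/-- The image of `T` in `R₂`. -/
noncomputable def tElt : VirtK2 := Ideal.Quotient.mk virtIdeal2 (X 1)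

/-- The first defining relation in `R₂`. -/
lemma rel1 : (tElt - 1) * (tElt ^ 2 - 1) = 0 := by
  have hmem : (X 1 - 1) * ((X 1 : MvPolynomial (Fin 2) ℚ) ^ 2 - 1) ∈ virtIdeal2 :=
    Ideal.subset_span (by simp)
  have := (Ideal.Quotient.eq_zero_iff_mem).2 hmem
  simpa [tElt, map_mul, map_sub, map_pow, map_one] using this

/-- The second defining relation in `R₂`. -/
lemma rel2 : (sElt - 1) * (sElt ^ 2 - 1) = 0 := by
  have hmem : (X 0 - 1) * ((X 0 : MvPolynomial (Fin 2) ℚ) ^ 2 - 1) ∈ virtIdeal2 :=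
    Ideal.subset_span (by simp)
  have := (Ideal.Quotient.eq_zero_iff_mem).2 hmem
  simpa [sElt, map_mul, map_sub, map_pow, map_one] using this

/-- The third defining relation in `R₂`. -/
lemma rel3 : (sElt - tElt) * (tElt - 1) = 0 := by
  have hmem : ((X 0 : MvPolynomial (Fin 2) ℚ) - X 1) * (X 1 - 1) ∈ virtIdeal2 :=
    Ideal.subset_span (by simp)
  have := (Ideal.Quotient.eq_zero_iff_mem).2 hmem
  simpa [sElt, tElt, map_mul, map_sub, map_one] using this

lemma key1 (ℓ : ℕ) : (tElt ^ ℓ - 1) * ((tElt ^ ℓ) ^ 2 - 1) = 0 := by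
  obtain ⟨a, ha⟩ := sub_dvd_pow_sub_pow tElt 1 ℓ
  obtain ⟨b, hb⟩ := sub_dvd_pow_sub_pow (tElt ^ 2) 1 ℓ
  have h1 : tElt ^ ℓ - 1 = (tElt - 1) * a := by simpa using ha
  have h2 : (tElt ^ ℓ) ^ 2 - 1 = (tElt ^ 2 - 1) * b := by
    have : (tElt ^ ℓ) ^ 2 = (tElt ^ 2) ^ ℓ := by ring
    rw [this]; simpa using hb
  rw [h1, h2]
  have : (tElt - 1) * a * ((tElt ^ 2 - 1) * b) =
      (tElt - 1) * (tElt ^ 2 - 1) * (a * b) := by ring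
  rw [this, rel1, zero_mul]

lemma key2 (ℓ : ℕ) : (sElt ^ ℓ - 1) * ((sElt ^ ℓ) ^ 2 - 1) = 0 := by
  obtain ⟨a, ha⟩ := sub_dvd_pow_sub_pow sElt 1 ℓ
  obtain ⟨b, hb⟩ := sub_dvd_pow_sub_pow (sElt ^ 2) 1 ℓ
  have h1 : sElt ^ ℓ - 1 = (sElt - 1) * a := by simpa using ha
  have h2 : (sElt ^ ℓ) ^ 2 - 1 = (sElt ^ 2 - 1) * b := by
    have : (sElt ^ ℓ) ^ 2 = (sElt ^ 2) ^ ℓ := by ring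
    rw [this]; simpa using hb
  rw [h1, h2]
  have : (sElt - 1) * a * ((sElt ^ 2 - 1) * b) =
      (sElt - 1) * (sElt ^ 2 - 1) * (a * b) := by ring
  rw [this, rel2, zero_mul]

lemma key3 (ℓ : ℕ) : (sElt ^ ℓ - tElt ^ ℓ) * (tElt ^ ℓ - 1) = 0 := by
  obtain ⟨a, ha⟩ := sub_dvd_pow_sub_pow sElt tElt ℓ
  obtain ⟨b, hb⟩ := sub_dvd_pow_sub_pow tElt 1 ℓ
  have h2 : tElt ^ ℓ - 1 = (tElt - 1) * b := by simpa using hb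
  rw [ha, h2]
  have : (sElt - tElt) * a * ((tElt - 1) * b) =
      (sElt - tElt) * (tElt - 1) * (a * b) := by ring
  rw [this, rel3, zero_mul]

/-- The Adams operation `ψ^ℓ` on `R₂`. -/
noncomputable def psiOp (ℓ : ℕ) : VirtK2 →ₐ[ℚ] VirtK2 :=
  Ideal.Quotient.liftₐ virtIdeal2 (aeval ![sElt ^ ℓ, tElt ^ ℓ]) (by
    intro p hp
    have hle : virtIdeal2 ≤ RingHom.ker (aeval (R := ℚ) ![sElt ^ ℓ, tElt ^ ℓ]).toRingHom := by
      unfold virtIdeal2; rw [Ideal.span_le]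
      rintro q hq
      simp only [Set.mem_insert_iff, Set.mem_singleton_iff] at hq
      rcases hq with rfl | rfl | rfl <;>
        simp only [SetLike.mem_coe, RingHom.mem_ker, AlgHom.toRingHom_eq_coe,
          RingHom.coe_coe, map_mul, map_sub, map_pow, map_one, aeval_X,
          Matrix.cons_val_zero, Matrix.cons_val_one, Matrix.head_cons]
      · exact (RingHom.mem_ker).2 (by change aeval (R := ℚ) ![sElt ^ ℓ, tElt ^ ℓ] ((X 1 - 1) * (X 1 ^ 2 - 1) : MvPolynomial (Fin 2) ℚ) = 0; simpa using key1 ℓ)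
      · exact (RingHom.mem_ker).2 (by change aeval (R := ℚ) ![sElt ^ ℓ, tElt ^ ℓ] ((X 0 - 1) * (X 0 ^ 2 - 1) : MvPolynomial (Fin 2) ℚ) = 0; simpa using key2 ℓ)
      · exact (RingHom.mem_ker).2 (by change aeval (R := ℚ) ![sElt ^ ℓ, tElt ^ ℓ] ((X 0 - X 1) * (X 1 - 1) : MvPolynomial (Fin 2) ℚ) = 0; simpa using key3 ℓ)
    exact hle hp)

lemma psiOp_s (ℓ : ℕ) : psiOp ℓ sElt = sElt ^ ℓ := by
  change aeval ![sElt ^ ℓ, tElt ^ ℓ] (X 0 : MvPolynomial (Fin 2) ℚ) = sElt ^ ℓ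
  simp

lemma psiOp_t (ℓ : ℕ) : psiOp ℓ tElt = tElt ^ ℓ := by
  change aeval ![sElt ^ ℓ, tElt ^ ℓ] (X 1 : MvPolynomial (Fin 2) ℚ) = tElt ^ ℓ
  simp

/-- Extensionality: algebra endomorphisms of `R₂` agreeing on `S` and `T` coincide. -/
lemma virtK2_hom_ext {f g : VirtK2 →ₐ[ℚ] VirtK2}
    (hs : f sElt = g sElt) (ht : f tElt = g tElt) : f = g := by
  apply Ideal.Quotient.algHom_ext
  apply MvPolynomial.algHom_ext
  intro i
  fin_cases i
  · exact hs
  · exact ht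

theorem virtual_Ktheory_P12_adams_operations :
    (∀ ℓ : ℕ, 1 ≤ ℓ →
      ∃! f : VirtK2 →ₐ[ℚ] VirtK2, f sElt = sElt ^ ℓ ∧ f tElt = tElt ^ ℓ) ∧
    (∀ ψ : ℕ → (VirtK2 →ₐ[ℚ] VirtK2),
      (∀ ℓ : ℕ, 1 ≤ ℓ → ψ ℓ sElt = sElt ^ ℓ ∧ ψ ℓ tElt = tElt ^ ℓ) →
      ψ 1 = AlgHom.id ℚ VirtK2 ∧
      ∀ k ℓ : ℕ, 1 ≤ k → 1 ≤ ℓ → (ψ k).comp (ψ ℓ) = ψ (k * ℓ)) := by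
  constructor
  · intro ℓ _
    refine ⟨psiOp ℓ, ⟨psiOp_s ℓ, psiOp_t ℓ⟩, ?_⟩
    rintro g ⟨hgs, hgt⟩
    exact virtK2_hom_ext (by rw [hgs, psiOp_s]) (by rw [hgt, psiOp_t])
  · intro ψ hψ
    constructor
    · have h := hψ 1 le_rfl
      exact virtK2_hom_ext (by rw [h.1, pow_one]; rfl) (by rw [h.2, pow_one]; rfl)
    · intro k ℓ hk hℓ
      have hkl := hψ (k * ℓ) (Nat.one_le_iff_ne_zero.2 (by positivity))
      apply virtK2_hom_ext
      · rw [AlgHom.comp_apply, (hψ ℓ hℓ).1, map_pow, (hψ k hk).1, hkl.1, ← pow_mul]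
      · rw [AlgHom.comp_apply, (hψ ℓ hℓ).2, map_pow, (hψ k hk).2, hkl.2, ← pow_mul]
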